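/- Let P = (Q,T) be a parameterized system with initial local state q₀, F ⊆ Q* a finite set of generators, B = {c ∈ Q* : ∃w ∈ F, w ⪯ c} the set of bad configurations, and define U₀ = B and U_{i+1} = U_i ∪ Pre(U_i) where Pre(U) = {c : ∃c' ∈ U, c →^A_P c'}. Suppose for some n, U_{n+1} = U_n and U_n ∩ Init = ∅, where Init = q₀*. Then there exists a FINITE first-order structure (a structure with finite domain) satisfying all formulas of Φ_P together with ¬Ψ_F. -/

import Mathlib

/-- Guards of conditional transition rules: `∀_I J` or `∃_I J` with `I ∈ {L, R, LR}`. -/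
inductive Guard (Q : Type) : Type
  | forallL (J : Set Q)
  | forallR (J : Set Q)
  | forallLR (J : Set Q)
  | existsL (J : Set Q)
  | existsR (J : Set Q)
  | existsLR (J : Set Q)

/-- A transition rule of a parameterized system: an optional guard, a source
local state and a target local state. -/
structure Rule (Q : Type) : Type where
  guard : Option (Guard Q)
  src : Q
  tgt : Q

/-- Satisfaction of a guard at a position whose strict left context is `u` and
strict right context is `v`. -/
def GuardSat {Q : Type} (g : Guard Q) (u v : List Q) : Prop :=
  match g with
  | .forallL J => ∀ q ∈ u, q ∈ J
  | .forallR J => ∀ q ∈ v, q ∈ J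
  | .forallLR J => (∀ q ∈ u, q ∈ J) ∧ (∀ q ∈ v, q ∈ J)
  | .existsL J => ∃ q ∈ u, q ∈ J
  | .existsR J => ∃ q ∈ v, q ∈ J
  | .existsLR J => (∃ q ∈ u, q ∈ J) ∨ (∃ q ∈ v, q ∈ J)

/-- One-step transition relation `→_P` of the parameterized system with rules `T`. -/
def Step {Q : Type} (T : Set (Rule Q)) (c c' : List Q) : Prop :=
  ∃ r ∈ T, ∃ u v : List Q,
    c = u ++ r.src :: v ∧ c' = u ++ r.tgt :: v ∧
      ∀ g, r.guard = some g → GuardSat g u v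

/-- Reachability `→*_P`: the reflexive-transitive closure of `→_P`. -/
def Reach {Q : Type} (T : Set (Rule Q)) : List Q → List Q → Prop :=
  Relation.ReflTransGen (Step T)

/-- Interpretation `[t_c]` of the closed term `t_c = c₁ * ⋯ * cₙ` (with `t_ε = e`)
in a structure with domain `M`, binary operation `mul`, constants `e` and `cq q`. -/
def wordVal {Q M : Type} (mul : M → M → M) (e : M) (cq : Q → M) : List Q → M
  | [] => e
  | [q] => cq q
  | q :: q' :: rest => mul (cq q) (wordVal mul e cq (q' :: rest))

/-- The set `J` of a universal guard (if any). -/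
def univGuardSet {Q : Type} (g : Guard Q) : Option (Set Q) :=
  match g with
  | .forallL J => some J
  | .forallR J => some J
  | .forallLR J => some J
  | _ => none

/-- The (universal closure of the) axiom of `Φ_P` corresponding to a single
transition rule, interpreted in a first-order structure with domain `M`. -/
def RuleAx {Q M : Type} (mul : M → M → M) (cq : Q → M)
    (R : M → Prop) (PJ : Set Q → M → Prop) (r : Rule Q) : Prop :=
  match r.guard with
  | none =>
      ∀ x y, R (mul (mul x (cq r.src)) y) → R (mul (mul x (cq r.tgt)) y)
  | some (.forallL J) =>
      ∀ x y, R (mul (mul x (cq r.src)) y) ∧ PJ J x → R (mul (mul x (cq r.tgt)) y)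
  | some (.forallR J) =>
      ∀ x y, R (mul (mul x (cq r.src)) y) ∧ PJ J y → R (mul (mul x (cq r.tgt)) y)
  | some (.forallLR J) =>
      ∀ x y, R (mul (mul x (cq r.src)) y) ∧ PJ J x ∧ PJ J y →
        R (mul (mul x (cq r.tgt)) y)
  | some (.existsL J) =>
      ∀ q ∈ J, ∀ x y z w,
        R (mul (mul x (cq r.src)) y) ∧ x = mul (mul z (cq q)) w →
          R (mul (mul x (cq r.tgt)) y)
  | some (.existsR J) =>
      ∀ q ∈ J, ∀ x y z w,
        R (mul (mul x (cq r.src)) y) ∧ y = mul (mul z (cq q)) w →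
          R (mul (mul x (cq r.tgt)) y)
  | some (.existsLR J) =>
      ∀ q ∈ J, ∀ x y z w,
        R (mul (mul x (cq r.src)) y) ∧
            (x = mul (mul z (cq q)) w ∨ y = mul (mul z (cq q)) w) →
          R (mul (mul x (cq r.tgt)) y)

/-- A first-order structure (domain `M`, operation `mul`, constants `e`, `cq q`,
predicates `In`, `R`, `P^J`) satisfies all formulas of the encoding `Φ_P` of the
parameterized system with rules `T` and initial local state `q0`. -/
def SatPhi {Q M : Type} (T : Set (Rule Q)) (q0 : Q)
    (mul : M → M → M) (e : M) (cq : Q → M)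
    (In R : M → Prop) (PJ : Set Q → M → Prop) : Prop :=
  (∀ x y z : M, mul (mul x y) z = mul x (mul y z)) ∧
  (∀ x : M, mul e x = x) ∧
  (∀ x : M, mul x e = x) ∧
  In e ∧
  (∀ x, In x → In (mul x (cq q0))) ∧
  (∀ x, In x → R x) ∧
  (∀ J : Set Q, (∃ r ∈ T, ∃ g, r.guard = some g ∧ univGuardSet g = some J) →
      PJ J e ∧ ∀ q ∈ J, ∀ x, PJ J x → PJ J (mul x (cq q))) ∧
  (∀ r ∈ T, RuleAx mul cq R PJ r)

/-- Value of the term `x₀ * w₁ * x₁ * ⋯ * wₙ * xₙ` under an assignment: `x0` is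
the value of `x₀` and `xs` the values of `x₁, …, xₙ`. -/
def psiVal {Q M : Type} (mul : M → M → M) (cq : Q → M) :
    M → List Q → List M → M
  | x, [], _ => x
  | x, _ :: _, [] => x
  | x, q :: ws, y :: ys => psiVal mul cq (mul (mul x (cq q)) y) ws ys

/-- The sentence `Ψ_F` (the existential closure of `⋁_{w ∈ F} ψ_w`, where
`ψ_w = R(x₀ * w₁ * x₁ * ⋯ * wₙ * xₙ)`) holds in the given structure. -/
def SatPsiF {Q M : Type} (mul : M → M → M) (cq : Q → M) (R : M → Prop)
    (F : Set (List Q)) : Prop :=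
  ∃ w ∈ F, ∃ x0 : M, ∃ xs : List M, xs.length = w.length ∧
    R (psiVal mul cq x0 w xs)

/-- The monotonic abstraction `→^A_P` of `→_P`:
`c →^A_P c'` iff some subword of `c` makes a `→_P` step to `c'`. -/
def AStep {Q : Type} (T : Set (Rule Q)) (c c' : List Q) : Prop :=
  ∃ c₁ : List Q, c₁.Sublist c ∧ Step T c₁ c'

/-- `Pre(U)`: configurations from which some configuration of `U` is reachable
in one `→^A_P` step. -/
def Pre {Q : Type} (T : Set (Rule Q)) (U : Set (List Q)) : Set (List Q) :=
  {c | ∃ c' ∈ U, AStep T c c'}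

/-- The backward reachability sequence: `U 0 = B`, `U (i+1) = U i ∪ Pre (U i)`. -/
def Useq {Q : Type} (T : Set (Rule Q)) (B : Set (List Q)) : ℕ → Set (List Q)
  | 0 => B
  | i + 1 => Useq T B i ∪ Pre T (Useq T B i)
namespace RC
open List

variable {Q : Type}

/-- Carrier of the finite model: sublist-closed sets of words of length ≤ N. -/
def Mset (Q : Type) (N : ℕ) : Type :=
  {A : Set (List Q) // (∀ w ∈ A, w.length ≤ N) ∧ ∀ w ∈ A, ∀ v, v.Sublist w → v ∈ A}

def mmul {N : ℕ} (A B : Mset Q N) : Mset Q N :=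
  ⟨{w | w.length ≤ N ∧ ∃ a ∈ A.1, ∃ b ∈ B.1, a ++ b = w}, by
    constructor
    · exact fun w hw => hw.1
    · rintro w ⟨hlen, a, ha, b, hb, rfl⟩ v hv
      have hvl : v.length ≤ N := le_trans hv.length_le hlen
      rcases List.sublist_append_iff.1 hv with ⟨a', b', rfl, ha', hb'⟩
      exact ⟨hvl, a', A.2.2 a ha a' ha', b', B.2.2 b hb b' hb', rfl⟩⟩

def mphi (N : ℕ) (u : List Q) : Mset Q N :=
  ⟨{w | w.length ≤ N ∧ w.Sublist u},
    fun w hw => hw.1,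
    fun w hw v hv => ⟨le_trans hv.length_le hw.1, hv.trans hw.2⟩⟩

lemma mem_mmul {N : ℕ} {A B : Mset Q N} {w : List Q} :
    w ∈ (mmul A B).1 ↔ w.length ≤ N ∧ ∃ a ∈ A.1, ∃ b ∈ B.1, a ++ b = w := Iff.rfl

lemma mem_mphi {N : ℕ} {u w : List Q} :
    w ∈ (mphi N u : Mset Q N).1 ↔ w.length ≤ N ∧ w.Sublist u := Iff.rfl

lemma massoc {N : ℕ} (A B C : Mset Q N) : mmul (mmul A B) C = mmul A (mmul B C) := by
  apply Subtype.ext; ext w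
  constructor
  · rintro ⟨hw, t, ⟨ht, a, ha, b, hb, rfl⟩, c, hc, rfl⟩
    refine ⟨hw, a, ha, b ++ c, ⟨?_, b, hb, c, hc, rfl⟩, (List.append_assoc a b c).symm ▸ rfl⟩
    · simp only [List.length_append] at hw ⊢; omega
  · rintro ⟨hw, a, ha, t, ⟨ht, b, hb, c, hc, rfl⟩, rfl⟩
    refine ⟨hw, a ++ b, ⟨?_, a, ha, b, hb, rfl⟩, c, hc, List.append_assoc a b c⟩
    simp only [List.length_append] at hw ⊢; omega

lemma mmul_e_left {N : ℕ} (A : Mset Q N) : mmul (mphi N []) A = A := by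
  apply Subtype.ext; ext w
  constructor
  · rintro ⟨hw, a, ⟨_, ha⟩, b, hb, rfl⟩
    rw [List.sublist_nil] at ha; subst ha; simpa using hb
  · intro hw
    exact ⟨A.2.1 w hw, [], ⟨by simp, List.nil_sublist _⟩, w, hw, rfl⟩

lemma mmul_e_right {N : ℕ} (A : Mset Q N) : mmul A (mphi N []) = A := by
  apply Subtype.ext; ext w
  constructor
  · rintro ⟨hw, a, ha, b, ⟨_, hb⟩, rfl⟩
    rw [List.sublist_nil] at hb; subst hb; simpa using ha
  · intro hw
    exact ⟨A.2.1 w hw, w, hw, [], ⟨by simp, List.nil_sublist _⟩, by simp⟩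

lemma mmul_phi {N : ℕ} (u v : List Q) :
    mmul (mphi N u) (mphi N v) = mphi N (u ++ v) := by
  apply Subtype.ext; ext w
  constructor
  · rintro ⟨hw, a, ⟨_, ha⟩, b, ⟨_, hb⟩, rfl⟩
    exact ⟨hw, ha.append hb⟩
  · rintro ⟨hw, hsub⟩
    rcases List.sublist_append_iff.1 hsub with ⟨a, b, rfl, ha, hb⟩
    simp only [List.length_append] at hw
    exact ⟨by simp only [List.length_append]; omega, a, ⟨by omega, ha⟩, b, ⟨by omega, hb⟩, rfl⟩

end RC
namespace RC
variable {Q : Type}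

lemma useq_mono (T : Set (Rule Q)) (B : Set (List Q)) {i j : ℕ} (h : i ≤ j) :
    Useq T B i ⊆ Useq T B j := by
  induction h with
  | refl => exact subset_rfl
  | step h ih => exact ih.trans Set.subset_union_left

lemma useq_upward {T : Set (Rule Q)} {B F : Set (List Q)}
    (hB : B = {c | ∃ w ∈ F, w.Sublist c}) :
    ∀ i, ∀ {c d : List Q}, c ∈ Useq T B i → c.Sublist d → d ∈ Useq T B i := by
  intro i
  induction i with
  | zero =>
    intro c d hc hcd
    subst hB
    obtain ⟨w, hw, hwc⟩ := hc
    exact ⟨w, hw, hwc.trans hcd⟩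
  | succ i ih =>
    intro c d hc hcd
    rcases hc with hc | ⟨c', hc', c₁, hsub, hstep⟩
    · exact Or.inl (ih hc hcd)
    · exact Or.inr ⟨c', hc', c₁, hsub.trans hcd, hstep⟩

lemma sub_extend {J : Set Q} {u s : List Q} (hs : s.Sublist u) (hw : ∃ q ∈ u, q ∈ J) :
    ∃ s', s.Sublist s' ∧ s'.Sublist u ∧ (∃ q ∈ s', q ∈ J) ∧ s'.length ≤ s.length + 1 := by
  obtain ⟨q, hqu, hqJ⟩ := hw
  obtain ⟨u₁, u₂, rfl⟩ := List.append_of_mem hqu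
  rcases List.sublist_append_iff.1 hs with ⟨s₁, s₂, rfl, hs₁, hs₂⟩
  rcases List.sublist_cons_iff.1 hs₂ with h | ⟨t, rfl, ht⟩
  · refine ⟨s₁ ++ q :: s₂, ?_, ?_, ⟨q, by simp, hqJ⟩, by simp; omega⟩
    · exact List.Sublist.append (List.Sublist.refl _) (List.sublist_cons_self q s₂)

    · exact List.Sublist.append hs₁ (List.cons_sublist_cons.2 h)
  · exact ⟨s₁ ++ q :: t, List.Sublist.refl _, hs, ⟨q, by simp, hqJ⟩, by simp⟩

lemma ctx_shrink {g : Guard Q} {u v mu mv : List Q} (hmu : mu.Sublist u) (hmv : mv.Sublist v)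
    (hg : GuardSat g u v) :
    ∃ mu' mv', mu.Sublist mu' ∧ mu'.Sublist u ∧ mv.Sublist mv' ∧ mv'.Sublist v ∧
      mu'.length ≤ mu.length + 1 ∧ mv'.length ≤ mv.length + 1 ∧ GuardSat g mu' mv' := by
  cases g with
  | forallL J =>
    exact ⟨mu, mv, .refl _, hmu, .refl _, hmv, Nat.le_succ _, Nat.le_succ _,
      fun q hq => hg q (hmu.subset hq)⟩
  | forallR J =>
    exact ⟨mu, mv, .refl _, hmu, .refl _, hmv, Nat.le_succ _, Nat.le_succ _,
      fun q hq => hg q (hmv.subset hq)⟩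
  | forallLR J =>
    exact ⟨mu, mv, .refl _, hmu, .refl _, hmv, Nat.le_succ _, Nat.le_succ _,
      fun q hq => hg.1 q (hmu.subset hq), fun q hq => hg.2 q (hmv.subset hq)⟩
  | existsL J =>
    obtain ⟨s', h1, h2, h3, h4⟩ := sub_extend hmu hg
    exact ⟨s', mv, h1, h2, .refl _, hmv, h4, Nat.le_succ _, h3⟩
  | existsR J =>
    obtain ⟨s', h1, h2, h3, h4⟩ := sub_extend hmv hg
    exact ⟨mu, s', .refl _, hmu, h1, h2, Nat.le_succ _, h4, h3⟩
  | existsLR J =>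
    rcases hg with hg | hg
    · obtain ⟨s', h1, h2, h3, h4⟩ := sub_extend hmu hg
      exact ⟨s', mv, h1, h2, .refl _, hmv, h4, Nat.le_succ _, Or.inl h3⟩
    · obtain ⟨s', h1, h2, h3, h4⟩ := sub_extend hmv hg
      exact ⟨mu, s', .refl _, hmu, h1, h2, Nat.le_succ _, h4, Or.inr h3⟩

lemma small_witness {T : Set (Rule Q)} {B F : Set (List Q)}
    (hB : B = {c | ∃ w ∈ F, w.Sublist c}) {L0 : ℕ} (hF0 : ∀ w ∈ F, w.length ≤ L0) :
    ∀ i, ∀ c ∈ Useq T B i, ∃ m, m.Sublist c ∧ m ∈ Useq T B i ∧ m.length ≤ L0 + 3 * i := by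
  intro i
  induction i with
  | zero =>
    intro c hc
    have hc' : c ∈ B := hc
    rw [hB] at hc'
    obtain ⟨w, hwF, hwc⟩ := hc'
    refine ⟨w, hwc, ?_, by simpa using hF0 w hwF⟩
    rw [hB]; exact ⟨w, hwF, List.Sublist.refl w⟩
  | succ i ih =>
    intro c hc
    rcases hc with hc | ⟨c', hc', c₁, hsub, hstep⟩
    · obtain ⟨m, h1, h2, h3⟩ := ih c hc
      exact ⟨m, h1, Or.inl h2, by omega⟩
    · obtain ⟨r, hrT, u, v, rfl, rfl, hgv⟩ := hstep
      obtain ⟨m, hmc', hmU, hmlen⟩ := ih _ hc'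
      have hm2 : m.Sublist (u ++ ([r.tgt] ++ v)) := by simpa using hmc'
      rcases List.sublist_append_iff.1 hm2 with ⟨mu, rest, rfl, hmu, hrest⟩
      rcases List.sublist_append_iff.1 hrest with ⟨mm, mv, rfl, hmm, hmv⟩
      have hctx : ∃ mu' mv', mu.Sublist mu' ∧ mu'.Sublist u ∧ mv.Sublist mv' ∧ mv'.Sublist v ∧
          mu'.length ≤ mu.length + 1 ∧ mv'.length ≤ mv.length + 1 ∧
          ∀ g, r.guard = some g → GuardSat g mu' mv' := by
        cases hgo : r.guard with
        | none =>
          exact ⟨mu, mv, .refl _, hmu, .refl _, hmv, Nat.le_succ _, Nat.le_succ _,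
            fun g h => by cases h⟩
        | some g =>
          obtain ⟨mu', mv', h1, h2, h3, h4, h5, h6, h7⟩ := ctx_shrink hmu hmv (hgv g hgo)
          refine ⟨mu', mv', h1, h2, h3, h4, h5, h6, fun g' h => ?_⟩
          injection h with h; subst h; exact h7
      obtain ⟨mu', mv', hmu1, hmu2, hmv1, hmv2, hl1, hl2, hgs⟩ := hctx
      have htgtU : (mu' ++ [r.tgt] ++ mv') ∈ Useq T B i := by
        refine useq_upward hB i hmU ?_
        have h' : (mu ++ (mm ++ mv)).Sublist (mu' ++ ([r.tgt] ++ mv')) :=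
          hmu1.append (hmm.append hmv1)
        simpa [List.append_assoc] using h'
      refine ⟨mu' ++ r.src :: mv', ?_, Or.inr ⟨mu' ++ [r.tgt] ++ mv', htgtU,
        mu' ++ r.src :: mv', List.Sublist.refl _, r, hrT, mu', mv', rfl, by simp, hgs⟩, ?_⟩
      · exact (hmu2.append (List.cons_sublist_cons.2 hmv2)).trans hsub
      · have h1 := hmu1.length_le
        have h2 := hmv1.length_le
        simp only [List.length_append, List.length_cons] at hmlen ⊢
        omega

end RC
namespace RC
variable {Q : Type}

lemma core {N : ℕ} (T : Set (Rule Q)) (U : Set (List Q))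
    (hup : ∀ {c d : List Q}, c ∈ U → c.Sublist d → d ∈ U)
    (hpre : Pre T U ⊆ U)
    (hsw : ∀ c ∈ U, ∃ m, m.Sublist c ∧ m ∈ U ∧ m.length ≤ N)
    {r : Rule Q} (hr : r ∈ T) (x y : Mset Q N)
    (hctx : ∀ a ∈ x.1, ∀ b ∈ y.1, ∃ a' b', a.Sublist a' ∧ b.Sublist b' ∧
        (∀ s, s.Sublist a' → s.length ≤ N → s ∈ x.1) ∧
        (∀ s, s.Sublist b' → s.length ≤ N → s ∈ y.1) ∧
        ∀ g, r.guard = some g → GuardSat g a' b')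
    (hR1 : [] ∈ (mmul (mmul x (mphi N [r.src])) y).1)
    (hR2 : ∀ w ∈ (mmul (mmul x (mphi N [r.src])) y).1, w ∉ U) :
    [] ∈ (mmul (mmul x (mphi N [r.tgt])) y).1 ∧
      ∀ w ∈ (mmul (mmul x (mphi N [r.tgt])) y).1, w ∉ U := by
  constructor
  · obtain ⟨-, t, ht, b, hb, htb⟩ := hR1
    obtain ⟨ht0, hb0⟩ := List.append_eq_nil_iff.1 htb
    subst ht0; subst hb0
    obtain ⟨-, a, ha, mm, hmm, hamm⟩ := ht
    obtain ⟨ha0, hm0⟩ := List.append_eq_nil_iff.1 hamm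
    subst ha0; subst hm0
    exact ⟨by simp, [], ⟨by simp, [], ha, [], ⟨by simp, List.nil_sublist _⟩, rfl⟩, [], hb, rfl⟩
  · rintro w ⟨hwN, t, ⟨htN, a, ha, mm, ⟨hmmN, hmmsub⟩, rfl⟩, b, hb, rfl⟩ hwU
    obtain ⟨a', b', haa, hbb, hxa, hyb, hgs⟩ := hctx a ha b hb
    have hstep : Step T (a' ++ r.src :: b') (a' ++ r.tgt :: b') :=
      ⟨r, hr, a', b', rfl, rfl, hgs⟩
    have hsubw : ((a ++ mm) ++ b).Sublist (a' ++ r.tgt :: b') := by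
      have h' : (a ++ (mm ++ b)).Sublist (a' ++ ([r.tgt] ++ b')) :=
        haa.append (hmmsub.append hbb)
      simpa [List.append_assoc] using h'
    have htgtU : (a' ++ r.tgt :: b') ∈ U := hup hwU hsubw
    have hsrcU : (a' ++ r.src :: b') ∈ U :=
      hpre ⟨_, htgtU, _, List.Sublist.refl _, hstep⟩
    obtain ⟨m, hmsub, hmU, hmN⟩ := hsw _ hsrcU
    have hmsub' : m.Sublist (a' ++ ([r.src] ++ b')) := by simpa using hmsub
    rcases List.sublist_append_iff.1 hmsub' with ⟨ma, rest, rfl, hma, hrest⟩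
    rcases List.sublist_append_iff.1 hrest with ⟨k, mb, rfl, hk, hmb⟩
    simp only [List.length_append] at hmN
    refine hR2 _ ⟨?_, ma ++ k, ⟨?_, ma, hxa ma hma (by omega), k, ⟨by omega, hk⟩, rfl⟩,
      mb, hyb mb hmb (by omega), (List.append_assoc _ _ _)⟩ hmU
    · simp only [List.length_append]; omega
    · simp only [List.length_append]; omega

lemma psi_nil_mem {N : ℕ} :
    ∀ (ws : List Q) (ys : List (Mset Q N)) (x : Mset Q N),
      [] ∈ (psiVal mmul (fun q => mphi N [q]) x ws ys).1 → [] ∈ x.1 := by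
  intro ws
  induction ws with
  | nil => intro ys x h; exact h
  | cons q ws ih =>
    intro ys x h
    cases ys with
    | nil => exact h
    | cons y ys =>
      have h' := ih ys _ h
      obtain ⟨-, a, ha, b, hb, hab⟩ := h'
      obtain ⟨ha0, hb0⟩ := List.append_eq_nil_iff.1 hab
      subst ha0; subst hb0
      obtain ⟨-, a, ha, m, hm, ham⟩ := ha
      obtain ⟨ha0, hm0⟩ := List.append_eq_nil_iff.1 ham
      subst ha0; subst hm0
      exact ha

lemma psi_mem {N : ℕ} :
    ∀ (ws : List Q) (ys : List (Mset Q N)) (x : Mset Q N) (u : List Q),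
      ws.length = ys.length → u ∈ x.1 →
      [] ∈ (psiVal mmul (fun q => mphi N [q]) x ws ys).1 →
      (u ++ ws).length ≤ N →
      u ++ ws ∈ (psiVal mmul (fun q => mphi N [q]) x ws ys).1 := by
  intro ws
  induction ws with
  | nil => intro ys x u _ hu _ _; simpa [psiVal] using hu
  | cons q ws ih =>
    intro ys x u hlen hu hnil hN
    cases ys with
    | nil => simp at hlen
    | cons y ys =>
      have hy0 : [] ∈ y.1 := by
        have hx' := psi_nil_mem ws ys _ hnil
        obtain ⟨-, a, ha, b, hb, hab⟩ := hx'
        obtain ⟨ha0, hb0⟩ := List.append_eq_nil_iff.1 hab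
        subst hb0; exact hb
      simp only [List.length_append, List.length_cons] at hN
      have hu' : u ++ [q] ∈ (mmul (mmul x (mphi N [q])) y).1 := by
        refine ⟨?_, u ++ [q], ⟨?_, u, hu, [q], ⟨by simp; omega, List.Sublist.refl _⟩, rfl⟩,
          [], hy0, by simp⟩ <;> simp <;> omega
      have hres := ih ys _ (u ++ [q]) (by simpa using hlen) hu' hnil
        (by simp only [List.length_append, List.length_cons]; simp; omega)
      simpa [List.append_assoc, psiVal] using hres

end RC
/-- relative completeness w.r.t. monotonic abstraction: if
the backward reachability sequence for the monotonic abstraction stabilizes,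
`U (n+1) = U n`, with `U n` disjoint from the set `Init = q0^*` of initial
configurations, then there exists a finite first-order structure satisfying all
formulas of `Φ_P` together with `¬Ψ_F`. -/
theorem relative_completeness {Q : Type} [Finite Q]
    (T : Set (Rule Q)) (hT : T.Finite) (q0 : Q)
    (F : Set (List Q)) (hF : F.Finite)
    (B : Set (List Q)) (hB : B = {c | ∃ w ∈ F, w.Sublist c})
    (n : ℕ) (hstab : Useq T B (n + 1) = Useq T B n)
    (hdisj : ∀ k : ℕ, List.replicate k q0 ∉ Useq T B n) :
    ∃ M : Type, Finite M ∧
      ∃ (mul : M → M → M) (e : M) (cq : Q → M)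
        (In R : M → Prop) (PJ : Set Q → M → Prop),
        SatPhi T q0 mul e cq In R PJ ∧ ¬ SatPsiF mul cq R F := by
  classical
  obtain ⟨L0, hL0⟩ : ∃ L0, ∀ w ∈ F, w.length ≤ L0 := by
    obtain ⟨L0, hL0⟩ := (hF.image List.length).bddAbove
    exact ⟨L0, fun w hw => hL0 (Set.mem_image_of_mem _ hw)⟩
  set N := L0 + 3 * n with hNdef
  set U := Useq T B n with hUdef
  have hup : ∀ {c d : List Q}, c ∈ U → c.Sublist d → d ∈ U :=
    fun hc hcd => RC.useq_upward hB n hc hcd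
  have hpre : Pre T U ⊆ U := by
    intro c hc
    have h1 : c ∈ Useq T B (n + 1) := Or.inr hc
    rwa [hstab] at h1
  have hsw : ∀ c ∈ U, ∃ m, m.Sublist c ∧ m ∈ U ∧ m.length ≤ N :=
    fun c hc => RC.small_witness hB hL0 n c hc
  have hBU : B ⊆ U := RC.useq_mono T B (Nat.zero_le n)
  refine ⟨RC.Mset Q N, ?_, RC.mmul, RC.mphi N [], fun q => RC.mphi N [q],
    (fun A => ∃ k, A = RC.mphi N (List.replicate k q0)),
    (fun A => [] ∈ A.1 ∧ ∀ w ∈ A.1, w ∉ U),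
    (fun J A => ∀ w ∈ A.1, ∀ q ∈ w, q ∈ J), ?_, ?_⟩
  · -- finiteness
    have h1 : {l : List Q | l.length ≤ N}.Finite := List.finite_length_le Q N
    haveI : Finite {l : List Q // l.length ≤ N} := h1.to_subtype
    refine Finite.of_injective
      (fun A : RC.Mset Q N => ({l : {l : List Q // l.length ≤ N} | l.1 ∈ A.1} : Set _)) ?_
    intro A A' h
    have h' : {l : {l : List Q // l.length ≤ N} | l.1 ∈ A.1} =
        {l : {l : List Q // l.length ≤ N} | l.1 ∈ A'.1} := h
    rw [Set.ext_iff] at h'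
    apply Subtype.ext; ext w
    constructor
    · intro hw
      exact (h' ⟨w, A.2.1 w hw⟩).1 hw
    · intro hw
      exact (h' ⟨w, A'.2.1 w hw⟩).2 hw
  · -- SatPhi
    refine ⟨RC.massoc, RC.mmul_e_left, RC.mmul_e_right, ⟨0, rfl⟩, ?_, ?_, ?_, ?_⟩
    · -- In step
      rintro x ⟨k, rfl⟩
      exact ⟨k + 1, by rw [RC.mmul_phi, List.replicate_succ']⟩
    · -- In → R
      rintro x ⟨k, rfl⟩
      refine ⟨⟨by simp, List.nil_sublist _⟩, ?_⟩
      intro w hw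
      have hrep : w = List.replicate w.length q0 :=
        List.eq_replicate_length.2 (fun b hb => List.eq_of_mem_replicate (hw.2.subset hb))
      rw [hrep]; exact hdisj w.length
    · -- PJ axioms
      intro J _
      constructor
      · intro w hw q hq
        have : w = [] := List.sublist_nil.1 hw.2
        subst this; simp at hq
      · rintro q hqJ x hx w ⟨-, a, ha, b, ⟨-, hb⟩, rfl⟩ q' hq'
        rcases List.mem_append.1 hq' with h | h
        · exact hx a ha q' h
        · have h2 := hb.subset h
          rw [List.mem_singleton] at h2; subst h2; exact hqJ
    · -- rules
      rintro ⟨g, q1, q2⟩ hr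
      cases g with
      | none =>
        intro x y h1
        exact RC.core T U hup hpre hsw hr x y
          (fun a ha b hb => ⟨a, b, .refl _, .refl _,
            fun s hs _ => x.2.2 a ha s hs, fun s hs _ => y.2.2 b hb s hs,
            fun g h => by cases h⟩) h1.1 h1.2
      | some g =>
        cases g with
        | forallL J =>
          rintro x y ⟨h1, h2⟩
          exact RC.core T U hup hpre hsw hr x y
            (fun a ha b hb => ⟨a, b, .refl _, .refl _,
              fun s hs _ => x.2.2 a ha s hs, fun s hs _ => y.2.2 b hb s hs,
              fun g h => by injection h with h; subst h; exact fun q hq => h2 a ha q hq⟩)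
            h1.1 h1.2
        | forallR J =>
          rintro x y ⟨h1, h2⟩
          exact RC.core T U hup hpre hsw hr x y
            (fun a ha b hb => ⟨a, b, .refl _, .refl _,
              fun s hs _ => x.2.2 a ha s hs, fun s hs _ => y.2.2 b hb s hs,
              fun g h => by injection h with h; subst h; exact fun q hq => h2 b hb q hq⟩)
            h1.1 h1.2
        | forallLR J =>
          rintro x y ⟨h1, h2, h3⟩
          exact RC.core T U hup hpre hsw hr x y
            (fun a ha b hb => ⟨a, b, .refl _, .refl _,
              fun s hs _ => x.2.2 a ha s hs, fun s hs _ => y.2.2 b hb s hs,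
              fun g h => by
                injection h with h
                subst h
                exact ⟨fun q hq => h2 a ha q hq, fun q hq => h3 b hb q hq⟩⟩)
            h1.1 h1.2
        | existsL J =>
          rintro q hqJ x y z w0 ⟨h1, rfl⟩
          refine RC.core T U hup hpre hsw hr _ y ?_ h1.1 h1.2
          rintro a ⟨haN, t, ⟨htN, p, hp, κ, ⟨hκN, hκ⟩, rfl⟩, s, hs, rfl⟩ b hb
          refine ⟨p ++ [q] ++ s, b, ?_, .refl _, ?_,
            fun s' hs' _ => y.2.2 b hb s' hs', ?_⟩
          · have h' : (p ++ (κ ++ s)).Sublist (p ++ ([q] ++ s)) :=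
              (List.Sublist.refl p).append (hκ.append (List.Sublist.refl s))
            simpa [List.append_assoc] using h'
          · intro s' hs' hs'N
            have hs'' : s'.Sublist (p ++ ([q] ++ s)) := by simpa [List.append_assoc] using hs'
            rcases List.sublist_append_iff.1 hs'' with ⟨α, rest, rfl, hα, hrest⟩
            rcases List.sublist_append_iff.1 hrest with ⟨κ', β, rfl, hκ', hβ⟩
            simp only [List.length_append] at hs'N
            exact ⟨by simp only [List.length_append]; omega, α ++ κ',
              ⟨by simp only [List.length_append]; omega, α, z.2.2 p hp α hα, κ',
                ⟨by omega, hκ'⟩, rfl⟩, β, w0.2.2 s hs β hβ, List.append_assoc _ _ _⟩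
          · intro g h
            injection h with h; subst h
            exact ⟨q, by simp, hqJ⟩
        | existsR J =>
          rintro q hqJ x y z w0 ⟨h1, rfl⟩
          refine RC.core T U hup hpre hsw hr x _ ?_ h1.1 h1.2
          rintro a ha b ⟨hbN, t, ⟨htN, p, hp, κ, ⟨hκN, hκ⟩, rfl⟩, s, hs, rfl⟩
          refine ⟨a, p ++ [q] ++ s, .refl _, ?_,
            fun s' hs' _ => x.2.2 a ha s' hs', ?_, ?_⟩
          · have h' : (p ++ (κ ++ s)).Sublist (p ++ ([q] ++ s)) :=
              (List.Sublist.refl p).append (hκ.append (List.Sublist.refl s))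
            simpa [List.append_assoc] using h'
          · intro s' hs' hs'N
            have hs'' : s'.Sublist (p ++ ([q] ++ s)) := by simpa [List.append_assoc] using hs'
            rcases List.sublist_append_iff.1 hs'' with ⟨α, rest, rfl, hα, hrest⟩
            rcases List.sublist_append_iff.1 hrest with ⟨κ', β, rfl, hκ', hβ⟩
            simp only [List.length_append] at hs'N
            exact ⟨by simp only [List.length_append]; omega, α ++ κ',
              ⟨by simp only [List.length_append]; omega, α, z.2.2 p hp α hα, κ',
                ⟨by omega, hκ'⟩, rfl⟩, β, w0.2.2 s hs β hβ, List.append_assoc _ _ _⟩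
          · intro g h
            injection h with h; subst h
            exact ⟨q, by simp, hqJ⟩
        | existsLR J =>
          rintro q hqJ x y z w0 ⟨h1, hor⟩
          rcases hor with rfl | rfl
          · refine RC.core T U hup hpre hsw hr _ y ?_ h1.1 h1.2
            rintro a ⟨haN, t, ⟨htN, p, hp, κ, ⟨hκN, hκ⟩, rfl⟩, s, hs, rfl⟩ b hb
            refine ⟨p ++ [q] ++ s, b, ?_, .refl _, ?_,
              fun s' hs' _ => y.2.2 b hb s' hs', ?_⟩
            · have h' : (p ++ (κ ++ s)).Sublist (p ++ ([q] ++ s)) :=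
                (List.Sublist.refl p).append (hκ.append (List.Sublist.refl s))
              simpa [List.append_assoc] using h'
            · intro s' hs' hs'N
              have hs'' : s'.Sublist (p ++ ([q] ++ s)) := by
                simpa [List.append_assoc] using hs'
              rcases List.sublist_append_iff.1 hs'' with ⟨α, rest, rfl, hα, hrest⟩
              rcases List.sublist_append_iff.1 hrest with ⟨κ', β, rfl, hκ', hβ⟩
              simp only [List.length_append] at hs'N
              exact ⟨by simp only [List.length_append]; omega, α ++ κ',
                ⟨by simp only [List.length_append]; omega, α, z.2.2 p hp α hα, κ',
                  ⟨by omega, hκ'⟩, rfl⟩, β, w0.2.2 s hs β hβ, List.append_assoc _ _ _⟩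
            · intro g h
              injection h with h; subst h
              exact Or.inl ⟨q, by simp, hqJ⟩
          · refine RC.core T U hup hpre hsw hr x _ ?_ h1.1 h1.2
            rintro a ha b ⟨hbN, t, ⟨htN, p, hp, κ, ⟨hκN, hκ⟩, rfl⟩, s, hs, rfl⟩
            refine ⟨a, p ++ [q] ++ s, .refl _, ?_,
              fun s' hs' _ => x.2.2 a ha s' hs', ?_, ?_⟩
            · have h' : (p ++ (κ ++ s)).Sublist (p ++ ([q] ++ s)) :=
                (List.Sublist.refl p).append (hκ.append (List.Sublist.refl s))
              simpa [List.append_assoc] using h'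
            · intro s' hs' hs'N
              have hs'' : s'.Sublist (p ++ ([q] ++ s)) := by
                simpa [List.append_assoc] using hs'
              rcases List.sublist_append_iff.1 hs'' with ⟨α, rest, rfl, hα, hrest⟩
              rcases List.sublist_append_iff.1 hrest with ⟨κ', β, rfl, hκ', hβ⟩
              simp only [List.length_append] at hs'N
              exact ⟨by simp only [List.length_append]; omega, α ++ κ',
                ⟨by simp only [List.length_append]; omega, α, z.2.2 p hp α hα, κ',
                  ⟨by omega, hκ'⟩, rfl⟩, β, w0.2.2 s hs β hβ, List.append_assoc _ _ _⟩
            · intro g h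
              injection h with h; subst h
              exact Or.inr ⟨q, by simp, hqJ⟩
  · -- ¬ SatPsiF
    rintro ⟨w, hwF, x0, xs, hlen, hR⟩
    have hwU : w ∈ U := hBU (by rw [hB]; exact ⟨w, hwF, List.Sublist.refl w⟩)
    have h0 : [] ∈ (psiVal RC.mmul (fun q => RC.mphi N [q]) x0 w xs).1 := hR.1
    have hx0 : [] ∈ x0.1 := RC.psi_nil_mem w xs x0 h0
    have hwmem := RC.psi_mem w xs x0 [] hlen.symm hx0 h0
      (by simp only [List.nil_append]; exact le_trans (hL0 w hwF) (Nat.le_add_right _ _))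
    rw [List.nil_append] at hwmem
    exact hR.2 w hwmem hwU
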